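/- arXiv:2111.06983 — 2 statements merged into one kernel-verified Lean document; each statement's English description precedes it below -/
import Mathlib

section
/- Let M be a matroid of rank r ≥ 2 that is a direct sum M = M₁ ⊕ M₂, where M₁ has a positive coline L. Then L ∪ E(M₂) is a positive coline of M. -/
open Set Matroid

namespace PositroidPaper

variable {α V : Type*}

/-- A circuit of a matroid: a minimal dependent set. -/
def Circuit (M : Matroid α) (C : Set α) : Prop :=
  M.Dep C ∧ ∀ D, D ⊂ C → M.Indep D

/-- A copoint (hyperplane): a maximal proper flat. -/
def IsCopoint (M : Matroid α) (H : Set α) : Prop :=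
  M.IsFlat H ∧ H ≠ M.E ∧ ∀ F, M.IsFlat F → H ⊂ F → F = M.E

/-- A coline: a flat of corank 2, i.e. a maximal flat properly contained in a copoint. -/
def IsColine (M : Matroid α) (L : Set α) : Prop :=
  M.IsFlat L ∧ L ≠ M.E ∧ ¬ IsCopoint M L ∧
    ∀ F, M.IsFlat F → L ⊂ F → F = M.E ∨ IsCopoint M F

/-- `H` is a simple copoint on the coline `L`. -/
def SimpleCopointOn (M : Matroid α) (L H : Set α) : Prop :=
  IsCopoint M H ∧ L ⊆ H ∧ (H \ L).ncard = 1

/-- `H` is a multiple copoint on the coline `L`. -/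
def MultipleCopointOn (M : Matroid α) (L H : Set α) : Prop :=
  IsCopoint M H ∧ L ⊆ H ∧ (H \ L).ncard ≠ 1

/-- A coline is positive if it lies on more simple than multiple copoints. -/
def PositiveColine (M : Matroid α) (L : Set α) : Prop :=
  IsColine M L ∧
    {H | MultipleCopointOn M L H}.ncard < {H | SimpleCopointOn M L H}.ncard

/-- A matroid has rank at least `n`. -/
def RankAtLeast (M : Matroid α) (n : ℕ) : Prop :=
  ∃ B, M.IsBase B ∧ n ≤ B.ncard

/-- A coloop: an element contained in every basis. -/
def Coloop (M : Matroid α) (e : α) : Prop :=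
  e ∈ M.E ∧ ∀ B, M.IsBase B → e ∈ B

/-- A matroid is connected if every pair of distinct elements lies in a common circuit. -/
def Connected (M : Matroid α) : Prop :=
  M.E.Nonempty ∧ ∀ e ∈ M.E, ∀ f ∈ M.E, e ≠ f → ∃ C, Circuit M C ∧ e ∈ C ∧ f ∈ C

/-- A directed path in a digraph with adjacency `Adj`: a nonempty, non-repeating
sequence of vertices with consecutive pairs joined by arcs. -/
def IsPath (Adj : V → V → Prop) (p : List V) : Prop :=
  p ≠ [] ∧ p.Nodup ∧ p.Chain' Adj

/-- A routing from `X` to `Y`: a family of pairwise vertex-disjoint directed paths,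
each `x ∈ X` being the initial vertex of some path, every path ending in `Y`. -/
def IsRouting (Adj : V → V → Prop) (X Y : Set V) (R : Set (List V)) : Prop :=
  (∀ p ∈ R, IsPath Adj p) ∧
  (∀ x ∈ X, ∃ p ∈ R, p.head? = some x) ∧
  (∀ p ∈ R, ∀ y, p.getLast? = some y → y ∈ Y) ∧
  (∀ p ∈ R, ∀ q ∈ R, p = q ∨ ∀ v, v ∈ p → v ∉ q)

/-- A linking from `X` to `Y`: a routing from `X` onto `Y`. -/
def IsLinking (Adj : V → V → Prop) (X Y : Set V) (R : Set (List V)) : Prop :=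
  IsRouting Adj X Y R ∧ Y = {y | ∃ p ∈ R, p.getLast? = some y}

/-- `M` is the gammoid `Γ(D,T,E)` represented by the digraph `Adj` with targets `T`
and ground set `E`: the independent sets are those subsets of `E` routable into `T`. -/
def IsGammoid (Adj : V → V → Prop) (T E : Set V) (M : Matroid V) : Prop :=
  M.E = E ∧ ∀ X, M.Indep X ↔ X ⊆ E ∧ ∃ R, IsRouting Adj X T R

section Aux

variable {M₁ M₂ : Matroid α}

lemma aux_inter_left (hdisj : Disjoint M₁.E M₂.E) {F : Set α} (hF : F ⊆ M₁.E) : (F ∪ M₂.E) ∩ M₁.E = F := by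
  rw [union_inter_distrib_right, inter_eq_self_of_subset_left hF, hdisj.symm.inter_eq, union_empty]

lemma aux_sum_comm (hdisj : Disjoint M₁.E M₂.E) :
    M₁.disjointSum M₂ hdisj = M₂.disjointSum M₁ hdisj.symm := by
  refine Matroid.ext_indep (by simp [union_comm]) fun I hI ↦ ?_
  simp only [disjointSum_indep_iff, union_comm M₂.E M₁.E]
  tauto

lemma aux_sum_flat_left (hdisj : Disjoint M₁.E M₂.E) {F : Set α} (hF : (M₁.disjointSum M₂ hdisj).IsFlat F) :
    M₁.IsFlat (F ∩ M₁.E) := by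
  have hFE : F ⊆ M₁.E ∪ M₂.E := by
    simpa using hF.subset_ground
  refine ⟨fun I X hIF hIX ↦ ?_, inter_subset_right⟩
  obtain ⟨J, hJ⟩ := M₂.exists_isBasis (F ∩ M₂.E) inter_subset_right
  have hIE : I ⊆ M₁.E := hIX.indep.subset_ground
  have hJE : J ⊆ M₂.E := hJ.indep.subset_ground
  have hXE : X ⊆ M₁.E := hIX.subset_ground
  have hJ1 : J ∩ M₁.E = ∅ := (hdisj.symm.mono_left hJE).inter_eq
  have hI2 : I ∩ M₂.E = ∅ := (hdisj.mono_left hIE).inter_eq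
  have hX2 : X ∩ M₂.E = ∅ := (hdisj.mono_left hXE).inter_eq
  have h1 : (I ∪ J) ∩ M₁.E = I := by
    rw [union_inter_distrib_right, inter_eq_self_of_subset_left hIE, hJ1, union_empty]
  have h2 : (I ∪ J) ∩ M₂.E = J := by
    rw [union_inter_distrib_right, inter_eq_self_of_subset_left hJE, hI2, empty_union]
  have hb1 : (M₁.disjointSum M₂ hdisj).IsBasis (I ∪ J) F := by
    rw [disjointSum_isBasis_iff]
    exact ⟨by rw [h1]; exact hIF, by rw [h2]; exact hJ,
      union_subset (hIF.subset.trans inter_subset_left) (hJ.subset.trans inter_subset_left), hFE⟩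
  have hb2 : (M₁.disjointSum M₂ hdisj).IsBasis (I ∪ J) (X ∪ F) := by
    rw [disjointSum_isBasis_iff]
    refine ⟨?_, ?_, union_subset (hIX.subset.trans subset_union_left)
      ((hJ.subset.trans inter_subset_left).trans subset_union_right),
      union_subset (hXE.trans subset_union_left) hFE⟩
    · rw [h1, union_inter_distrib_right, inter_eq_self_of_subset_left hXE]
      exact Matroid.IsBasis.isBasis_union hIX hIF
    · rw [h2, union_inter_distrib_right, hX2, empty_union]
      exact hJ
  have hXF : X ∪ F ⊆ F := hF.subset_of_isBasis_of_isBasis hb1 hb2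
  exact subset_inter ((subset_union_left).trans hXF) hXE

lemma aux_sum_flat_iff (hdisj : Disjoint M₁.E M₂.E) {F : Set α} :
    (M₁.disjointSum M₂ hdisj).IsFlat F ↔
      M₁.IsFlat (F ∩ M₁.E) ∧ M₂.IsFlat (F ∩ M₂.E) ∧ F ⊆ M₁.E ∪ M₂.E := by
  constructor
  · intro hF
    refine ⟨aux_sum_flat_left hdisj hF, aux_sum_flat_left hdisj.symm (M₁ := M₂) (M₂ := M₁) ?_,
      by simpa using hF.subset_ground⟩
    rwa [← aux_sum_comm hdisj]
  rintro ⟨h1, h2, hFE⟩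
  refine ⟨fun I X hIF hIX ↦ ?_, by rw [disjointSum_ground_eq]; exact hFE⟩
  rw [disjointSum_isBasis_iff] at hIF hIX
  intro x hx
  rcases hIX.2.2.2 hx with hx1 | hx2
  · exact inter_subset_left (h1.subset_of_isBasis_of_isBasis hIF.1 hIX.1 ⟨hx, hx1⟩)
  · exact inter_subset_left (h2.subset_of_isBasis_of_isBasis hIF.2.1 hIX.2.1 ⟨hx, hx2⟩)

lemma aux_flat_union (hdisj : Disjoint M₁.E M₂.E) {F : Set α} (hF : M₁.IsFlat F) :
    (M₁.disjointSum M₂ hdisj).IsFlat (F ∪ M₂.E) := by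
  rw [aux_sum_flat_iff hdisj, aux_inter_left hdisj hF.subset_ground]
  have : (F ∪ M₂.E) ∩ M₂.E = M₂.E := inter_eq_self_of_subset_right subset_union_right
  rw [this]
  exact ⟨hF, M₂.ground_isFlat, union_subset_union_left _ hF.subset_ground⟩

lemma aux_flat_structure (hdisj : Disjoint M₁.E M₂.E) {F : Set α} (hF : (M₁.disjointSum M₂ hdisj).IsFlat F)
    (hE2 : M₂.E ⊆ F) : F = (F ∩ M₁.E) ∪ M₂.E ∧ M₁.IsFlat (F ∩ M₁.E) := by
  have hFE : F ⊆ M₁.E ∪ M₂.E := by simpa using hF.subset_ground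
  refine ⟨?_, aux_sum_flat_left hdisj hF⟩
  apply subset_antisymm
  · intro x hx
    rcases hFE hx with h | h
    · exact Or.inl ⟨hx, h⟩
    · exact Or.inr h
  · exact union_subset inter_subset_left hE2

lemma aux_union_ne (hdisj : Disjoint M₁.E M₂.E) {F : Set α} (hF : F ⊆ M₁.E) :
    F ∪ M₂.E = M₁.E ∪ M₂.E ↔ F = M₁.E := by
  constructor
  · intro h
    have := congrArg (· ∩ M₁.E) h
    simpa [aux_inter_left hdisj hF, aux_inter_left hdisj (Subset.refl M₁.E)] using this
  · rintro rfl; rfl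

lemma aux_union_ssubset (hdisj : Disjoint M₁.E M₂.E) {F G : Set α} (hF : F ⊆ M₁.E) (hG : G ⊆ M₁.E) :
    F ∪ M₂.E ⊂ G ∪ M₂.E ↔ F ⊂ G := by
  constructor
  · rintro ⟨hsub, hns⟩
    have h1 : F ⊆ G := by
      intro x hx
      rcases hsub (Or.inl hx) with h | h
      · exact h
      · exact absurd h (disjoint_left.1 hdisj (hF hx))
    refine ⟨h1, fun hGF ↦ hns (union_subset_union_left _ hGF)⟩
  · rintro ⟨hsub, hns⟩
    refine ⟨union_subset_union_left _ hsub, fun h ↦ hns ?_⟩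
    intro x hx
    rcases h (Or.inl hx) with h' | h'
    · exact h'
    · exact absurd h' (disjoint_left.1 hdisj (hG hx))

lemma aux_copoint_iff (hdisj : Disjoint M₁.E M₂.E) {H : Set α} (hH : M₁.IsFlat H) :
    IsCopoint (M₁.disjointSum M₂ hdisj) (H ∪ M₂.E) ↔ IsCopoint M₁ H := by
  have hHE := hH.subset_ground
  constructor
  · rintro ⟨-, hne, hmax⟩
    refine ⟨hH, fun h ↦ hne (by rw [h, disjointSum_ground_eq]), fun F hF hHF ↦ ?_⟩
    have := hmax (F ∪ M₂.E) (aux_flat_union hdisj hF)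
      ((aux_union_ssubset hdisj hHE hF.subset_ground).2 hHF)
    rw [disjointSum_ground_eq] at this
    exact (aux_union_ne hdisj hF.subset_ground).1 this
  · rintro ⟨-, hne, hmax⟩
    refine ⟨aux_flat_union hdisj hH, ?_, fun F hF hHF ↦ ?_⟩
    · rw [disjointSum_ground_eq, Ne, aux_union_ne hdisj hHE]
      exact hne
    obtain ⟨hFeq, hFflat⟩ := aux_flat_structure hdisj hF (subset_union_right.trans hHF.subset)
    have hss : H ⊂ F ∩ M₁.E := by
      rw [← aux_union_ssubset hdisj hHE inter_subset_right, ← hFeq]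
      exact hHF
    rw [disjointSum_ground_eq, hFeq, hmax _ hFflat hss]

lemma aux_diff_eq (hdisj : Disjoint M₁.E M₂.E) {H L : Set α} (hH : H ⊆ M₁.E) :
    (H ∪ M₂.E) \ (L ∪ M₂.E) = H \ L := by
  ext x
  simp only [mem_diff, mem_union, not_or]
  constructor
  · rintro ⟨hx | hx, hL, h2⟩
    · exact ⟨hx, hL⟩
    · exact absurd hx h2
  · rintro ⟨hx, hL⟩
    exact ⟨Or.inl hx, hL, disjoint_left.1 hdisj (hH hx)⟩

lemma aux_copoint_on (hdisj : Disjoint M₁.E M₂.E) {L H : Set α} (hL : M₁.IsFlat L)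
    (hH : IsCopoint (M₁.disjointSum M₂ hdisj) H) (hLH : L ∪ M₂.E ⊆ H) :
    ∃ H₁, IsCopoint M₁ H₁ ∧ L ⊆ H₁ ∧ H = H₁ ∪ M₂.E ∧ H₁ ⊆ M₁.E := by
  obtain ⟨hFeq, hFflat⟩ := aux_flat_structure hdisj hH.1 (subset_union_right.trans hLH)
  refine ⟨H ∩ M₁.E, ?_, subset_inter ((subset_union_left).trans hLH) hL.subset_ground,
    hFeq, inter_subset_right⟩
  rw [← aux_copoint_iff hdisj hFflat, ← hFeq]
  exact hH

lemma aux_copointOn_image (hdisj : Disjoint M₁.E M₂.E) {L : Set α} (hL : M₁.IsFlat L) (P : ℕ → Prop) :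
    {H | IsCopoint (M₁.disjointSum M₂ hdisj) H ∧ L ∪ M₂.E ⊆ H ∧ P ((H \ (L ∪ M₂.E)).ncard)}
      = (fun H ↦ H ∪ M₂.E) '' {H | IsCopoint M₁ H ∧ L ⊆ H ∧ P ((H \ L).ncard)} := by
  ext H'
  constructor
  · rintro ⟨hcp, hsub, hcard⟩
    obtain ⟨H₁, hH₁cp, hLH₁, hEq, hH₁E⟩ := aux_copoint_on hdisj hL hcp hsub
    refine ⟨H₁, ⟨hH₁cp, hLH₁, ?_⟩, hEq.symm⟩
    rwa [← aux_diff_eq hdisj (L := L) hH₁E, ← hEq]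
  · rintro ⟨H₁, ⟨hcp, hLH, hcard⟩, rfl⟩
    have hH₁E : H₁ ⊆ M₁.E := hcp.1.subset_ground
    exact ⟨(aux_copoint_iff hdisj hcp.1).2 hcp, union_subset_union_left _ hLH,
      by rwa [aux_diff_eq hdisj hH₁E]⟩

lemma aux_injOn (hdisj : Disjoint M₁.E M₂.E) {S : Set (Set α)} (hS : ∀ H ∈ S, H ⊆ M₁.E) :
    InjOn (fun H ↦ H ∪ M₂.E) S := by
  intro H hH H' hH' heq
  have := congrArg (· ∩ M₁.E) heq
  simpa [aux_inter_left hdisj (hS H hH),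
    aux_inter_left hdisj (hS H' hH')] using this

end Aux

/-- If `M = M₁ ⊕ M₂` has rank at least 2 and `L` is a positive coline of `M₁`,
then `L ∪ E(M₂)` is a positive coline of `M`. -/
theorem positiveColine_of_directSum (M M₁ M₂ : Matroid α)
    (hdisj : Disjoint M₁.E M₂.E) (hM : M = M₁.disjointSum M₂ hdisj)
    (hrank : RankAtLeast M 2) (L : Set α) (hL : PositiveColine M₁ L) :
    PositiveColine M (L ∪ M₂.E) := by
  subst hM
  obtain ⟨⟨hLflat, hLne, hLnotcp, hLmax⟩, hcount⟩ := hL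
  have hLE := hLflat.subset_ground
  constructor
  · refine ⟨aux_flat_union hdisj hLflat, ?_, ?_, ?_⟩
    · rw [disjointSum_ground_eq, Ne, aux_union_ne hdisj hLE]
      exact hLne
    · intro hcp
      exact hLnotcp ((aux_copoint_iff hdisj hLflat).1 hcp)
    · intro F hF hLF
      obtain ⟨hFeq, hFflat⟩ := aux_flat_structure hdisj hF (subset_union_right.trans hLF.subset)
      have hss : L ⊂ F ∩ M₁.E := by
        rw [← aux_union_ssubset hdisj hLE inter_subset_right, ← hFeq]
        exact hLF
      rcases hLmax _ hFflat hss with h | h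
      · left; rw [disjointSum_ground_eq, hFeq, h]
      · right; rw [hFeq]; exact (aux_copoint_iff hdisj hFflat).2 h
  · have h1 : {H | SimpleCopointOn (M₁.disjointSum M₂ hdisj) (L ∪ M₂.E) H}
        = (fun H ↦ H ∪ M₂.E) '' {H | SimpleCopointOn M₁ L H} :=
      aux_copointOn_image hdisj hLflat (fun n ↦ n = 1)
    have h2 : {H | MultipleCopointOn (M₁.disjointSum M₂ hdisj) (L ∪ M₂.E) H}
        = (fun H ↦ H ∪ M₂.E) '' {H | MultipleCopointOn M₁ L H} :=
      aux_copointOn_image hdisj hLflat (fun n ↦ n ≠ 1)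
    rw [h1, h2, Set.ncard_image_of_injOn (aux_injOn hdisj fun H hH ↦ hH.1.1.subset_ground),
      Set.ncard_image_of_injOn (aux_injOn hdisj fun H hH ↦ hH.1.1.subset_ground)]
    exact hcount
end PositroidPaper
end

section
/- Let M = Γ(D,T,E) be a gammoid with T ⊆ E, let t ∈ T, and let e ∈ E \ T be such that every directed path in D starting at e passes through t and ends in T. If moreover {e} is independent, then e and t are parallel in M. -/
open Set Matroid

namespace PositroidPaper

variable {α V : Type*}

/-- In a gammoid `Γ(D,T,E)` with `T ⊆ E`: if every directed path starting at `e`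
and ending in `T` passes through `t ∈ T`, and `{e}` is independent, then `e` and `t`
are parallel (i.e. `{e, t}` is a circuit). -/
theorem gammoid_parallel (Adj : V → V → Prop) (T E : Set V) (M : Matroid V)
    (hM : IsGammoid Adj T E M) (hTE : T ⊆ E) (t : V) (ht : t ∈ T)
    (e : V) (he : e ∈ E \ T)
    (hpath : ∀ p, IsPath Adj p → p.head? = some e →
      (∃ y ∈ T, p.getLast? = some y) → t ∈ p)
    (hind : M.Indep {e}) :
    e ≠ t ∧ Circuit M {e, t} := by
  obtain ⟨hE, hIndep⟩ := hM
  have het : e ≠ t := fun h => he.2 (h ▸ ht)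
  have htI : M.Indep {t} := by
    rw [hIndep]
    refine ⟨by simpa using hTE ht, {[t]}, ?_, ?_, ?_, ?_⟩
    · rintro p rfl
      exact ⟨by simp, by simp, List.isChain_singleton t⟩
    · rintro x rfl
      exact ⟨[x], rfl, rfl⟩
    · rintro p rfl y hy
      simp at hy
      exact hy ▸ ht
    · rintro p rfl q rfl
      exact Or.inl rfl
  have hdep : ¬ M.Indep {e, t} := by
    intro h
    rw [hIndep] at h
    obtain ⟨hsub, R, hpaths, hcover, hend, hdisj⟩ := h
    obtain ⟨p, hp, hpe⟩ := hcover e (Set.mem_insert _ _)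
    obtain ⟨q, hq, hqt⟩ := hcover t (Set.mem_insert_of_mem _ rfl)
    have hpne : p ≠ [] := (hpaths p hp).1
    have hlast : p.getLast? = some (p.getLast hpne) := List.getLast?_eq_getLast hpne
    have hyT : p.getLast hpne ∈ T := hend p hp _ hlast
    have htp : t ∈ p := hpath p (hpaths p hp) hpe ⟨_, hyT, hlast⟩
    have htq : t ∈ q := by
      cases q with
      | nil => simp at hqt
      | cons a l => simp at hqt; simp [hqt]
    have hpq : p ≠ q := by
      intro h; rw [h, hqt] at hpe
      exact het (Option.some.inj hpe).symm
    rcases hdisj p hp q hq with h | h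
    · exact hpq h
    · exact h t htp htq
  refine ⟨het, ⟨⟨hdep, by rw [hE]; exact Set.insert_subset he.1 (Set.singleton_subset_iff.2 (hTE ht))⟩, ?_⟩⟩
  intro D hD
  by_cases hte : t ∈ D
  · have hDe : e ∉ D := by
      intro heD
      apply hD.2
      intro x hx
      rcases hx with rfl | rfl
      · exact heD
      · exact hte
    have : D ⊆ {t} := by
      intro x hx
      rcases hD.1 hx with rfl | rfl
      · exact absurd hx hDe
      · rfl
    exact htI.subset this
  · have : D ⊆ {e} := by
      intro x hx
      rcases hD.1 hx with rfl | rfl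
      · rfl
      · exact absurd hx hte
    exact hind.subset this
end PositroidPaper
end
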